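/- In the Squier complex of a monoid presentation, for every two positive paths A = e₁ ∘ ⋯ ∘ eₙ and B = f₁ ∘ ⋯ ∘ fₘ (or more generally paths with edges of either orientation), the two parallel paths A·ιB ∘ τA·B and ιA·B ∘ A·τB are homotopic, where · denotes the two-sided action of the free monoid on edges and paths. -/

import Mathlib

section

/- The Squier complex of a monoid presentation `P = (x, r)`: vertices are the
elements of the free monoid `F` on `x`, and `R` indexes the rewriting rules
`(r₊, r₋)`. -/
variable (x R : Type) (rp rm : R → FreeMonoid x)

/-- Oriented edges `(w, r, ε, w')` of the Squier complex (`ε = true` is positive). -/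
abbrev SqEdge : Type := FreeMonoid x × R × Bool × FreeMonoid x

/-- Initial vertex `ι(w, r, ε, w') = w r_ε w'`. -/
def sqSrc : SqEdge x R → FreeMonoid x :=
  fun e => e.1 * (if e.2.2.1 then rp e.2.1 else rm e.2.1) * e.2.2.2

/-- Terminal vertex `τ(w, r, ε, w') = w r_{−ε} w'`. -/
def sqTgt : SqEdge x R → FreeMonoid x :=
  fun e => e.1 * (if e.2.2.1 then rm e.2.1 else rp e.2.1) * e.2.2.2

/-- The inverse edge `(w, r, ε, w')⁻¹ = (w, r, −ε, w')`. -/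
def sqInv : SqEdge x R → SqEdge x R := fun e => (e.1, e.2.1, !e.2.2.1, e.2.2.2)

/-- Left translation `z·(w, r, ε, w') = (zw, r, ε, w')`. -/
def sqL : FreeMonoid x → SqEdge x R → SqEdge x R :=
  fun z e => (z * e.1, e.2.1, e.2.2.1, e.2.2.2)

/-- Right translation `(w, r, ε, w')·z = (w, r, ε, w'z)`. -/
def sqR : FreeMonoid x → SqEdge x R → SqEdge x R :=
  fun z e => (e.1, e.2.1, e.2.2.1, e.2.2.2 * z)

/-- A path is a list of oriented edges with matching consecutive endpoints. -/
def SqIsPath (l : List (SqEdge x R)) : Prop :=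
  List.Chain' (fun e f => sqTgt x R rp rm e = sqSrc x R rp rm f) l

/-- Homotopy of paths in the Squier complex: the equivalence relation on paths
generated by the square 2-cells `[e, f]` (for positive edges `e, f`), by
cancellation of an edge with its inverse, and closed under composition of paths. -/
inductive SqHomotopic : List (SqEdge x R) → List (SqEdge x R) → Prop
  | square (u v u' v' : FreeMonoid x) (r s : R) :
      SqHomotopic
        [(u, r, true, v * (u' * rp s * v')), (u * rm r * v * u', s, true, v')]
        [(u * rp r * v * u', s, true, v'), (u, r, true, v * (u' * rm s * v'))]
  | cancel (e : SqEdge x R) : SqHomotopic [e, sqInv x R e] []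
  | refl (p : List (SqEdge x R)) : SqHomotopic p p
  | symm {p q} : SqHomotopic p q → SqHomotopic q p
  | trans {p q r} : SqHomotopic p q → SqHomotopic q r → SqHomotopic p r
  | append (a b : List (SqEdge x R)) {p q} :
      SqHomotopic p q → SqHomotopic (a ++ p ++ b) (a ++ q ++ b)

/-! ### Auxiliary lemmas -/

lemma sqInv_sqInv (e : SqEdge x R) : sqInv x R (sqInv x R e) = e := by
  simp [sqInv]

lemma sqSrc_sqInv (e : SqEdge x R) :
    sqSrc x R rp rm (sqInv x R e) = sqTgt x R rp rm e := by
  rcases e with ⟨u, r, ε, v⟩; cases ε <;> simp [sqSrc, sqTgt, sqInv]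

lemma sqTgt_sqInv (e : SqEdge x R) :
    sqTgt x R rp rm (sqInv x R e) = sqSrc x R rp rm e := by
  rcases e with ⟨u, r, ε, v⟩; cases ε <;> simp [sqSrc, sqTgt, sqInv]

/-- Inserting a cancelling pair at the front of a path. -/
lemma sq_cancel_cons (e : SqEdge x R) (q : List (SqEdge x R)) :
    SqHomotopic x R rp rm (e :: sqInv x R e :: q) q := by
  simpa using SqHomotopic.append [] q (SqHomotopic.cancel (rp := rp) (rm := rm) e)

/-- Appending a cancelling pair at the end of a path. -/
lemma sq_cancel_append (p : List (SqEdge x R)) (e : SqEdge x R) :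
    SqHomotopic x R rp rm (p ++ [e, sqInv x R e]) p := by
  simpa using SqHomotopic.append p [] (SqHomotopic.cancel (rp := rp) (rm := rm) e)

/-- The basic exchange relation for a pair of single edges. -/
def SqBase (e f : SqEdge x R) : Prop :=
  SqHomotopic x R rp rm
    [sqR x R (sqSrc x R rp rm f) e, sqL x R (sqTgt x R rp rm e) f]
    [sqL x R (sqSrc x R rp rm e) f, sqR x R (sqTgt x R rp rm f) e]

lemma sqBase_pos_pos (u v u' v' : FreeMonoid x) (r s : R) :
    SqBase x R rp rm (u, r, true, v) (u', s, true, v') := by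
  have h := SqHomotopic.square (x := x) (R := R) (rp := rp) (rm := rm) u v u' v' r s
  simpa [SqBase, sqSrc, sqTgt, sqR, sqL, mul_assoc] using h

lemma sqBase_flip_e (e f : SqEdge x R) (h : SqBase x R rp rm (sqInv x R e) f) :
    SqBase x R rp rm e f := by
  unfold SqBase at h ⊢
  rw [sqSrc_sqInv, sqTgt_sqInv] at h
  have s1 : SqHomotopic x R rp rm
      [sqL x R (sqSrc x R rp rm e) f, sqR x R (sqTgt x R rp rm f) e]
      (sqR x R (sqSrc x R rp rm f) e :: sqInv x R (sqR x R (sqSrc x R rp rm f) e) ::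
        [sqL x R (sqSrc x R rp rm e) f, sqR x R (sqTgt x R rp rm f) e]) :=
    (sq_cancel_cons x R rp rm _ _).symm
  have s2 : SqHomotopic x R rp rm
      ([sqR x R (sqSrc x R rp rm f) e] ++
        [sqR x R (sqSrc x R rp rm f) (sqInv x R e), sqL x R (sqSrc x R rp rm e) f] ++
        [sqR x R (sqTgt x R rp rm f) e])
      ([sqR x R (sqSrc x R rp rm f) e] ++
        [sqL x R (sqTgt x R rp rm e) f, sqR x R (sqTgt x R rp rm f) (sqInv x R e)] ++
        [sqR x R (sqTgt x R rp rm f) e]) :=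
    SqHomotopic.append _ _ h
  have s3 : SqHomotopic x R rp rm
      ([sqR x R (sqSrc x R rp rm f) e, sqL x R (sqTgt x R rp rm e) f] ++
        [sqR x R (sqTgt x R rp rm f) (sqInv x R e), sqR x R (sqTgt x R rp rm f) e])
      [sqR x R (sqSrc x R rp rm f) e, sqL x R (sqTgt x R rp rm e) f] := by
    have h2 := sq_cancel_append x R rp rm
      [sqR x R (sqSrc x R rp rm f) e, sqL x R (sqTgt x R rp rm e) f]
      (sqR x R (sqTgt x R rp rm f) (sqInv x R e))
    simpa [sqInv, sqR, sqL, Bool.not_not] using h2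
  exact (s1.trans (s2.trans s3)).symm

lemma sqBase_flip_f (e f : SqEdge x R) (h : SqBase x R rp rm e (sqInv x R f)) :
    SqBase x R rp rm e f := by
  unfold SqBase at h ⊢
  rw [sqSrc_sqInv, sqTgt_sqInv] at h
  have s1 : SqHomotopic x R rp rm
      [sqR x R (sqSrc x R rp rm f) e, sqL x R (sqTgt x R rp rm e) f]
      (sqL x R (sqSrc x R rp rm e) f :: sqInv x R (sqL x R (sqSrc x R rp rm e) f) ::
        [sqR x R (sqSrc x R rp rm f) e, sqL x R (sqTgt x R rp rm e) f]) :=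
    (sq_cancel_cons x R rp rm _ _).symm
  have s2 : SqHomotopic x R rp rm
      ([sqL x R (sqSrc x R rp rm e) f] ++
        [sqL x R (sqSrc x R rp rm e) (sqInv x R f), sqR x R (sqSrc x R rp rm f) e] ++
        [sqL x R (sqTgt x R rp rm e) f])
      ([sqL x R (sqSrc x R rp rm e) f] ++
        [sqR x R (sqTgt x R rp rm f) e, sqL x R (sqTgt x R rp rm e) (sqInv x R f)] ++
        [sqL x R (sqTgt x R rp rm e) f]) :=
    SqHomotopic.append _ _ h.symm
  have s3 : SqHomotopic x R rp rm
      ([sqL x R (sqSrc x R rp rm e) f, sqR x R (sqTgt x R rp rm f) e] ++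
        [sqL x R (sqTgt x R rp rm e) (sqInv x R f), sqL x R (sqTgt x R rp rm e) f])
      [sqL x R (sqSrc x R rp rm e) f, sqR x R (sqTgt x R rp rm f) e] := by
    have h2 := sq_cancel_append x R rp rm
      [sqL x R (sqSrc x R rp rm e) f, sqR x R (sqTgt x R rp rm f) e]
      (sqL x R (sqTgt x R rp rm e) (sqInv x R f))
    simpa [sqInv, sqR, sqL, Bool.not_not] using h2
  exact s1.trans (s2.trans s3)

lemma sqBase_all (e f : SqEdge x R) : SqBase x R rp rm e f := by
  rcases e with ⟨u, r, ε, v⟩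
  rcases f with ⟨u', s, δ, v'⟩
  cases ε <;> cases δ
  · exact sqBase_flip_e x R rp rm _ _ (sqBase_flip_f x R rp rm _ _
      (sqBase_pos_pos x R rp rm u v u' v' r s))
  · exact sqBase_flip_e x R rp rm _ _ (sqBase_pos_pos x R rp rm u v u' v' r s)
  · exact sqBase_flip_f x R rp rm _ _ (sqBase_pos_pos x R rp rm u v u' v' r s)
  · exact sqBase_pos_pos x R rp rm u v u' v' r s

/-- Exchange for a single edge against a nonempty path. -/
lemma sq_single (e : SqEdge x R) :
    ∀ (B : List (SqEdge x R)) (hB : B ≠ []) (_hpB : SqIsPath x R rp rm B),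
    SqHomotopic x R rp rm
      (sqR x R (sqSrc x R rp rm (B.head hB)) e :: B.map (sqL x R (sqTgt x R rp rm e)))
      (B.map (sqL x R (sqSrc x R rp rm e)) ++
        [sqR x R (sqTgt x R rp rm (B.getLast hB)) e])
  | [f], _, _ => by simpa [SqBase] using sqBase_all x R rp rm e f
  | f :: g :: t, _, hp => by
    have hfg : sqTgt x R rp rm f = sqSrc x R rp rm g := (List.isChain_cons_cons.mp hp).1
    have hp' : SqIsPath x R rp rm (g :: t) := (List.isChain_cons_cons.mp hp).2
    have ih := sq_single e (g :: t) (by simp) hp'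
    refine SqHomotopic.trans
      (q := sqL x R (sqSrc x R rp rm e) f ::
        sqR x R (sqSrc x R rp rm g) e :: (g :: t).map (sqL x R (sqTgt x R rp rm e))) ?_ ?_
    · have h0 := SqHomotopic.append []
        ((g :: t).map (sqL x R (sqTgt x R rp rm e))) (sqBase_all x R rp rm e f)
      rw [← hfg]
      simpa using h0
    · have t2 := SqHomotopic.append [sqL x R (sqSrc x R rp rm e) f] [] ih
      simpa [List.getLast_cons] using t2

/-- Exchange for two nonempty paths. -/
lemma sq_pair :
    ∀ (A : List (SqEdge x R)) (B : List (SqEdge x R)) (hA : A ≠ []) (hB : B ≠ [])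
      (_hpA : SqIsPath x R rp rm A) (hpB : SqIsPath x R rp rm B),
    SqHomotopic x R rp rm
      (A.map (sqR x R (sqSrc x R rp rm (B.head hB))) ++
        B.map (sqL x R (sqTgt x R rp rm (A.getLast hA))))
      (B.map (sqL x R (sqSrc x R rp rm (A.head hA))) ++
        A.map (sqR x R (sqTgt x R rp rm (B.getLast hB))))
  | [e], B, _, hB, _, hpB => by
    simpa using sq_single x R rp rm e B hB hpB
  | e :: a :: A', B, _, hB, hpA, hpB => by
    have hea : sqTgt x R rp rm e = sqSrc x R rp rm a := (List.isChain_cons_cons.mp hpA).1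
    have hpA' : SqIsPath x R rp rm (a :: A') := (List.isChain_cons_cons.mp hpA).2
    have ih := sq_pair (a :: A') B (by simp) hB hpA' hpB
    refine SqHomotopic.trans
      (q := sqR x R (sqSrc x R rp rm (B.head hB)) e ::
        (B.map (sqL x R (sqTgt x R rp rm e)) ++
          (a :: A').map (sqR x R (sqTgt x R rp rm (B.getLast hB))))) ?_ ?_
    · have t1 := SqHomotopic.append [sqR x R (sqSrc x R rp rm (B.head hB)) e] [] ih
      rw [hea]
      simpa [List.getLast_cons] using t1
    · have t2 := SqHomotopic.append []
        ((a :: A').map (sqR x R (sqTgt x R rp rm (B.getLast hB))))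
        (sq_single x R rp rm e B hB hpB)
      simpa using t2

/-- for any two paths `A`, `B` of positive length in the Squier
complex, the parallel paths `A·ιB ∘ τA·B` and `ιA·B ∘ A·τB` are homotopic. -/
theorem squier_exchange_homotopic
    (A B : List (SqEdge x R)) (hA : A ≠ []) (hB : B ≠ [])
    (hpA : SqIsPath x R rp rm A) (hpB : SqIsPath x R rp rm B) :
    SqHomotopic x R rp rm
      (A.map (sqR x R (sqSrc x R rp rm (B.head hB))) ++
        B.map (sqL x R (sqTgt x R rp rm (A.getLast hA))))
      (B.map (sqL x R (sqSrc x R rp rm (A.head hA))) ++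
        A.map (sqR x R (sqTgt x R rp rm (B.getLast hB)))) := by
  exact sq_pair x R rp rm A B hA hB hpA hpB

end
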